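/- arXiv:2411.08084 — 2 statements merged into one kernel-verified Lean document; each statement's English description precedes it below -/
import Mathlib

section
/- Let P be the first-return map of the Collatz map on N1 ∪ N2, H a complex Hilbert space with orthonormal basis {e_n}_{n ∈ N1∪N2}, T1, T2 the bounded operators with T1 e_n = e_{P(n)} for n ∈ N1, T1 e_n = 0 for n ∈ N2, T2 e_n = e_{P(n)} for n ∈ N2, T2 e_n = 0 for n ∈ N1, and set S1 = T1*T2*, S2 = T2*. Then C*(S1,S2) = C*(T1,T2), S1 and S2 are isometries, S1 S1* + S2 S2* = I, and S1* S2 = 0 = S2* S1 (so S1, S2 satisfy the Cuntz O_2 relations). -/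
/-- The Collatz map on positive integers: `3n+1` for odd `n`, `n/2` for even `n`. -/
def collatz (n : ℕ+) : ℕ+ :=
  if h : (n : ℕ) % 2 = 1 then 3 * n + 1
  else ⟨(n : ℕ) / 2, by
    have h2 : 0 < n.1 := n.2
    have h3 : ¬ n.1 % 2 = 1 := h
    show 0 < n.1 / 2
    omega⟩

/-- The forward orbit of `x` under `f`. -/
def orbit {X : Type*} (f : X → X) (x : X) : Set X := Set.range fun k => f^[k] x

/-- The orbit equivalence relation induced by `f`: `x ~ y` iff the orbits meet. -/
def orbEquiv {X : Type*} (f : X → X) (x y : X) : Prop :=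
  (orbit f x ∩ orbit f y).Nonempty

/-- `N₁ = {n : n ≡ 1, 5 (mod 6)}`. -/
def N1 : Set ℕ+ := {n : ℕ+ | (n : ℕ) % 6 = 1 ∨ (n : ℕ) % 6 = 5}

/-- `N₂ = {n : n ≡ 4, 16 (mod 18)}`. -/
def N2 : Set ℕ+ := {n : ℕ+ | (n : ℕ) % 18 = 4 ∨ (n : ℕ) % 18 = 16}

/-- `y` is the first return of `x` to `S` under iteration of `f`: for some `k ≥ 1`,
`y = f^[k] x ∈ S` and no earlier positive iterate of `x` lies in `S`. -/
def IsFirstReturn {X : Type*} (f : X → X) (S : Set X) (x y : X) : Prop :=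
  ∃ k : ℕ, 0 < k ∧ f^[k] x ∈ S ∧ y = f^[k] x ∧ ∀ j : ℕ, 0 < j → j < k → f^[j] x ∉ S

/-- The C*-algebra of operators generated by a set `S` of bounded operators on a complex
Hilbert space: the closure of the (non-unital) star subalgebra generated by `S`. -/
noncomputable def CstarGen {H : Type*} [NormedAddCommGroup H] [InnerProductSpace ℂ H]
    [CompleteSpace H] (S : Set (H →L[ℂ] H)) : Set (H →L[ℂ] H) :=
  closure (NonUnitalStarAlgebra.adjoin ℂ S : Set (H →L[ℂ] H))


lemma collatz_odd (n : ℕ+) (h : (n : ℕ) % 2 = 1) : collatz n = 3 * n + 1 := dif_pos h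

lemma collatz_even (n : ℕ+) (h : (n : ℕ) % 2 = 0) : ((collatz n : ℕ+) : ℕ) = (n : ℕ) / 2 := by
  simp [collatz, show ¬ (n:ℕ) % 2 = 1 by omega]

lemma mem_N1_iff {x : ℕ+} : x ∈ N1 ↔ ((x : ℕ) % 6 = 1 ∨ (x : ℕ) % 6 = 5) := Iff.rfl
lemma mem_N2_iff {x : ℕ+} : x ∈ N2 ↔ ((x : ℕ) % 18 = 4 ∨ (x : ℕ) % 18 = 16) := Iff.rfl

lemma N1_odd {x : ℕ+} (h : x ∈ N1) : (x : ℕ) % 2 = 1 := by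
  rcases mem_N1_iff.mp h with h | h <;> omega

lemma N2_even {x : ℕ+} (h : x ∈ N2) : (x : ℕ) % 2 = 0 := by
  rcases mem_N2_iff.mp h with h | h <;> omega

lemma not_N1_N2 {x : ℕ+} (h1 : x ∈ N1) (h2 : x ∈ N2) : False := by
  have := N1_odd h1; have := N2_even h2; omega

lemma coe_tma (x : ℕ+) : ((3 * x + 1 : ℕ+) : ℕ) = 3 * (x : ℕ) + 1 := rfl

lemma isFirstReturn_unique {X : Type*} {f : X → X} {S : Set X} {x y z : X}
    (hy : IsFirstReturn f S x y) (hz : IsFirstReturn f S x z) : y = z := by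
  obtain ⟨k, hk, hkS, rfl, hkmin⟩ := hy
  obtain ⟨l, hl, hlS, rfl, hlmin⟩ := hz
  rcases lt_trichotomy k l with h | h | h
  · exact absurd hkS (hlmin k hk h)
  · rw [h]
  · exact absurd hlS (hkmin l hl h)

lemma mem_N2_of_N1 {x : ℕ+} (hx : x ∈ N1) : (3 * x + 1 : ℕ+) ∈ N2 := by
  rw [mem_N2_iff, coe_tma]
  rcases mem_N1_iff.mp hx with h | h
  · left; omega
  · right; omega

lemma firstReturn_N1 {x : ℕ+} (hx : x ∈ N1) :
    IsFirstReturn collatz (N1 ∪ N2) x (3 * x + 1) := by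
  refine ⟨1, one_pos, ?_, ?_, fun j hj1 hj2 => by omega⟩
  · show collatz^[1] x ∈ N1 ∪ N2
    rw [Function.iterate_one, collatz_odd x (N1_odd hx)]
    exact Or.inr (mem_N2_of_N1 hx)
  · rw [Function.iterate_one, collatz_odd x (N1_odd hx)]

lemma mem_S_mod3 {x : ℕ+} (h : x ∈ N1 ∪ N2) : (x : ℕ) % 3 ≠ 0 := by
  rcases h with h | h
  · rcases mem_N1_iff.mp h with h | h <;> omega
  · rcases mem_N2_iff.mp h with h | h <;> omega

lemma N2_halving {x m : ℕ+} (hx : x ∈ N2) (hm : IsFirstReturn collatz (N1 ∪ N2) x m) :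
    ∃ k, 0 < k ∧ (x : ℕ) = (m : ℕ) * 2 ^ k ∧
      ∀ j, 0 < j → j < k → ∀ z : ℕ+, (z : ℕ) = (m : ℕ) * 2 ^ j → z ∉ N2 := by
  obtain ⟨k, hk, hkS, hme, hkmin⟩ := hm
  have h3 : (x : ℕ) % 3 = 1 := by rcases mem_N2_iff.mp hx with h | h <;> omega
  have key : ∀ j ≤ k, ((collatz^[j] x : ℕ+) : ℕ) * 2 ^ j = (x : ℕ) := by
    intro j hj
    induction j with
    | zero => simp
    | succ n ih =>
      have hn := ih (by omega)
      have hyeven : ((collatz^[n] x : ℕ+) : ℕ) % 2 = 0 := by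
        by_contra hodd
        have hodd' : ((collatz^[n] x : ℕ+) : ℕ) % 2 = 1 := by omega
        have h3y : ((collatz^[n] x : ℕ+) : ℕ) % 3 ≠ 0 := by
          intro h0
          have : (x : ℕ) % 3 = 0 := by
            rw [← hn, Nat.mul_mod, h0]; simp
          omega
        have hyN1 : (collatz^[n] x : ℕ+) ∈ N1 := by
          rw [mem_N1_iff]; omega
        rcases Nat.eq_zero_or_pos n with rfl | hn0
        · simp only [Function.iterate_zero, id_eq] at hodd'
          have := N2_even hx; omega
        · exact hkmin n hn0 (by omega) (Or.inl hyN1)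
      rw [Function.iterate_succ_apply', collatz_even _ hyeven, pow_succ,
        Nat.mul_comm ((2:ℕ)^n) 2, ← Nat.mul_assoc,
        Nat.div_mul_cancel (by omega : 2 ∣ ((collatz^[n] x : ℕ+) : ℕ)), hn]
  refine ⟨k, hk, ?_, ?_⟩
  · rw [← key k le_rfl, ← hme]
  · intro j hj1 hj2 z hz
    have hx2 : (x : ℕ) = (m : ℕ) * 2 ^ k := by rw [← key k le_rfl, ← hme]
    have hkey := key (k - j) (by omega)
    have hzval : ((collatz^[k - j] x : ℕ+) : ℕ) = (m : ℕ) * 2 ^ j := by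
      have h2 : ((collatz^[k - j] x : ℕ+) : ℕ) * 2 ^ (k - j) = ((m : ℕ) * 2 ^ j) * 2 ^ (k - j) := by
        rw [hkey, hx2, Nat.mul_assoc, ← pow_add]
        congr 2
        omega
      exact Nat.eq_of_mul_eq_mul_right (Nat.pow_pos (by norm_num)) h2
    have hzeq : z = collatz^[k - j] x := by
      apply PNat.coe_injective
      rw [hz, hzval]
    intro hzN2
    exact hkmin (k - j) (by omega) (by omega) (hzeq ▸ Or.inr hzN2)

lemma exists_return_from_N2 {m : ℕ+} (hm : m ∈ N1 ∪ N2) :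
    ∃ x : ℕ+, x ∈ N2 ∧ IsFirstReturn collatz (N1 ∪ N2) x m := by
  classical
  have h3 : (m : ℕ) % 3 ≠ 0 := mem_S_mod3 hm
  have hex : ∃ j, 0 < j ∧ ((2 ^ j * (m : ℕ)) % 18 = 4 ∨ (2 ^ j * (m : ℕ)) % 18 = 16) := by
    have h9 : (m : ℕ) % 9 = 1 ∨ (m : ℕ) % 9 = 2 ∨ (m : ℕ) % 9 = 4 ∨ (m : ℕ) % 9 = 5 ∨
        (m : ℕ) % 9 = 7 ∨ (m : ℕ) % 9 = 8 := by omega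
    have e1 : (2:ℕ) ^ 1 = 2 := by norm_num
    have e2 : (2:ℕ) ^ 2 = 4 := by norm_num
    have e3 : (2:ℕ) ^ 3 = 8 := by norm_num
    have e4 : (2:ℕ) ^ 4 = 16 := by norm_num
    rcases h9 with h | h | h | h | h | h
    · exact ⟨2, by omega, by rw [e2]; omega⟩
    · exact ⟨1, by omega, by rw [e1]; omega⟩
    · exact ⟨2, by omega, by rw [e2]; omega⟩
    · exact ⟨3, by omega, by rw [e3]; omega⟩
    · exact ⟨4, by omega, by rw [e4]; omega⟩
    · exact ⟨1, by omega, by rw [e1]; omega⟩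
  set Q : ℕ → Prop := fun j => 0 < j ∧ ((2 ^ j * (m : ℕ)) % 18 = 4 ∨ (2 ^ j * (m : ℕ)) % 18 = 16)
    with hQdef
  have hQ : ∃ j, Q j := hex
  set k := Nat.find hQ with hkdef
  obtain ⟨hkpos, hk18⟩ := Nat.find_spec hQ
  have hxpos : 0 < 2 ^ k * (m : ℕ) := by positivity
  set x : ℕ+ := ⟨2 ^ k * (m : ℕ), hxpos⟩ with hxdef
  have hxcoe : (x : ℕ) = 2 ^ k * (m : ℕ) := rfl
  have hxN2 : x ∈ N2 := by rw [mem_N2_iff, hxcoe]; exact hk18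
  have traj : ∀ s ≤ k, ((collatz^[s] x : ℕ+) : ℕ) = 2 ^ (k - s) * (m : ℕ) := by
    intro s hs
    induction s with
    | zero => simpa using hxcoe
    | succ n ih =>
      have ihn := ih (by omega)
      obtain ⟨t, ht⟩ : ∃ t, k - n = t + 1 := ⟨k - n - 1, by omega⟩
      have hsplit : (2:ℕ) ^ (t + 1) * (m : ℕ) = 2 * (2 ^ t * (m : ℕ)) := by ring
      have heven : ((collatz^[n] x : ℕ+) : ℕ) % 2 = 0 := by
        rw [ihn, ht, hsplit]
        exact Nat.mul_mod_right 2 _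
      rw [Function.iterate_succ_apply', collatz_even _ heven, ihn, ht, hsplit,
        Nat.mul_div_cancel_left _ (by norm_num : 0 < 2)]
      congr 2
      omega
  have htop : collatz^[k] x = m := by
    apply PNat.coe_injective
    rw [traj k le_rfl]
    simp
  refine ⟨x, hxN2, k, hkpos, ?_, ?_, ?_⟩
  · rw [htop]; exact hm
  · rw [htop]
  · intro j hj1 hj2
    have hval := traj j (by omega)
    obtain ⟨t, ht⟩ : ∃ t, k - j = t + 1 := ⟨k - j - 1, by omega⟩
    have hsplit : (2:ℕ) ^ (t + 1) * (m : ℕ) = 2 * (2 ^ t * (m : ℕ)) := by ring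
    have heven : ((collatz^[j] x : ℕ+) : ℕ) % 2 = 0 := by
      rw [hval, ht, hsplit]
      exact Nat.mul_mod_right 2 _
    intro hS
    rcases hS with hS | hS
    · have := N1_odd hS; omega
    · have hQkj : Q (k - j) := by
        refine ⟨by omega, ?_⟩
        rw [← hval]
        exact mem_N2_iff.mp hS
      exact absurd hQkj (Nat.find_min hQ (by omega))


section Hilbert

local notation "⟪" x ", " y "⟫" => @inner ℂ _ _ x y

open ContinuousLinearMap

lemma hb_vec_ext {H : Type*} [NormedAddCommGroup H] [InnerProductSpace ℂ H] [CompleteSpace H]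
    {ι : Type*} (b : HilbertBasis ι ℂ H) {x y : H}
    (h : ∀ i, ⟪b i, x⟫ = ⟪b i, y⟫) : x = y := by
  apply b.repr.injective
  apply lp.ext
  funext i
  rw [b.repr_apply_apply, b.repr_apply_apply]
  exact h i

lemma hb_op_ext {H : Type*} [NormedAddCommGroup H] [InnerProductSpace ℂ H] [CompleteSpace H]
    {ι : Type*} (b : HilbertBasis ι ℂ H) {A B : H →L[ℂ] H}
    (h : ∀ i, A (b i) = B (b i)) : A = B := by
  refine ContinuousLinearMap.ext_on
    (Submodule.dense_iff_topologicalClosure_eq_top.mpr b.dense_span) ?_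
  rintro _ ⟨i, rfl⟩
  exact h i

lemma norm_of_adjoint_mul_self {H : Type*} [NormedAddCommGroup H] [InnerProductSpace ℂ H]
    [CompleteSpace H] (S : H →L[ℂ] H) (hS : ContinuousLinearMap.adjoint S * S = 1)
    (v : H) : ‖S v‖ = ‖v‖ := by
  have h0 : (ContinuousLinearMap.adjoint S) (S v) = v := by
    rw [← ContinuousLinearMap.mul_apply, hS, ContinuousLinearMap.one_apply]
  have h1 : ⟪S v, S v⟫ = ⟪v, v⟫ := by
    rw [← ContinuousLinearMap.adjoint_inner_left, h0]
  have h2 : ‖S v‖ ^ 2 = ‖v‖ ^ 2 := by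
    rw [inner_self_eq_norm_sq_to_K, inner_self_eq_norm_sq_to_K] at h1
    exact_mod_cast h1
  rw [← Real.sqrt_sq (norm_nonneg (S v)), h2, Real.sqrt_sq (norm_nonneg v)]

end Hilbert


section Main

local notation "⟪" x ", " y "⟫" => @inner ℂ _ _ x y


/-- `C*(S₁,S₂) = C*(T₁,T₂)`, `S₁, S₂` are isometries, `S₁S₁* + S₂S₂* = 1` and
`S₁*S₂ = 0 = S₂*S₁`: the Cuntz `O₂` relations. -/
theorem cuntz_relations {H : Type*} [NormedAddCommGroup H] [InnerProductSpace ℂ H]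
    [CompleteSpace H] (b : HilbertBasis ↥(N1 ∪ N2) ℂ H)
    (P : ↥(N1 ∪ N2) → ↥(N1 ∪ N2))
    (hP : ∀ x : ↥(N1 ∪ N2), IsFirstReturn collatz (N1 ∪ N2) ↑x ↑(P x))
    (T1 T2 : H →L[ℂ] H)
    (hT1 : ∀ x : ↥(N1 ∪ N2), ((x : ℕ+) ∈ N1 → T1 (b x) = b (P x)) ∧
      ((x : ℕ+) ∈ N2 → T1 (b x) = 0))
    (hT2 : ∀ x : ↥(N1 ∪ N2), ((x : ℕ+) ∈ N2 → T2 (b x) = b (P x)) ∧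
      ((x : ℕ+) ∈ N1 → T2 (b x) = 0))
    (S1 S2 : H →L[ℂ] H)
    (hS1 : S1 = ContinuousLinearMap.adjoint T1 * ContinuousLinearMap.adjoint T2)
    (hS2 : S2 = ContinuousLinearMap.adjoint T2) :
    CstarGen {S1, S2} = CstarGen {T1, T2} ∧
      (∀ v : H, ‖S1 v‖ = ‖v‖) ∧ (∀ v : H, ‖S2 v‖ = ‖v‖) ∧
      S1 * ContinuousLinearMap.adjoint S1 + S2 * ContinuousLinearMap.adjoint S2 = 1 ∧
      ContinuousLinearMap.adjoint S1 * S2 = 0 ∧ ContinuousLinearMap.adjoint S2 * S1 = 0 := by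
  classical
  have hbi : ∀ i j : ↥(N1 ∪ N2), ⟪b i, b j⟫ = if i = j then 1 else 0 :=
    orthonormal_iff_ite.mp b.orthonormal
  have hcases : ∀ i : ↥(N1 ∪ N2), (i : ℕ+) ∈ N1 ∨ (i : ℕ+) ∈ N2 := fun i => i.2
  -- Facts about P
  have hPN1val : ∀ x : ↥(N1 ∪ N2), (x : ℕ+) ∈ N1 → ((P x : ℕ+)) = 3 * (x : ℕ+) + 1 :=
    fun x hx => isFirstReturn_unique (hP x) (firstReturn_N1 hx)
  have hPN1mem : ∀ x : ↥(N1 ∪ N2), (x : ℕ+) ∈ N1 → ((P x : ℕ+)) ∈ N2 := fun x hx => by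
    rw [hPN1val x hx]; exact mem_N2_of_N1 hx
  have hinjN1 : ∀ x y : ↥(N1 ∪ N2), (x : ℕ+) ∈ N1 → (y : ℕ+) ∈ N1 → P x = P y → x = y := by
    intro x y hx hy h
    have h1 := hPN1val x hx
    rw [h, hPN1val y hy] at h1
    have h2 := congrArg (fun t : ℕ+ => (t : ℕ)) h1
    simp only [coe_tma] at h2
    exact Subtype.ext (PNat.coe_injective (by omega))
  have hinjN2 : ∀ x y : ↥(N1 ∪ N2), (x : ℕ+) ∈ N2 → (y : ℕ+) ∈ N2 → P x = P y → x = y := by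
    intro x y hx hy h
    obtain ⟨k, hk, hxval, hxmin⟩ := N2_halving hx (hP x)
    obtain ⟨l, hl, hyval, hymin⟩ := N2_halving hy (hP y)
    rw [h] at hxval hxmin
    rcases lt_trichotomy k l with hkl | hkl | hkl
    · exact absurd hx (hymin k hk hkl (x : ℕ+) hxval)
    · subst hkl
      exact Subtype.ext (PNat.coe_injective (by rw [hxval, hyval]))
    · exact absurd hy (hxmin l hl hkl (y : ℕ+) hyval)
  have hsurjN2 : ∀ m : ↥(N1 ∪ N2), ∃ n : ↥(N1 ∪ N2), (n : ℕ+) ∈ N2 ∧ P n = m := by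
    intro m
    obtain ⟨x, hxN2, hret⟩ := exists_return_from_N2 m.2
    refine ⟨⟨x, Or.inr hxN2⟩, hxN2, ?_⟩
    exact Subtype.ext (isFirstReturn_unique (hP ⟨x, Or.inr hxN2⟩) hret)
  have hsurjN1 : ∀ m : ↥(N1 ∪ N2), (m : ℕ+) ∈ N2 →
      ∃ n : ↥(N1 ∪ N2), (n : ℕ+) ∈ N1 ∧ P n = m := by
    intro m hm
    have h18 := mem_N2_iff.mp hm
    have hpos : 0 < (((m : ℕ+) : ℕ) - 1) / 3 := by omega
    set n0 : ℕ+ := ⟨(((m : ℕ+) : ℕ) - 1) / 3, hpos⟩ with hn0def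
    have hn0coe : (n0 : ℕ) = (((m : ℕ+) : ℕ) - 1) / 3 := rfl
    have hn0N1 : n0 ∈ N1 := by rw [mem_N1_iff, hn0coe]; omega
    refine ⟨⟨n0, Or.inl hn0N1⟩, hn0N1, ?_⟩
    apply Subtype.ext
    rw [hPN1val ⟨n0, Or.inl hn0N1⟩ hn0N1]
    apply PNat.coe_injective
    rw [coe_tma]
    show 3 * ((((m : ℕ+) : ℕ) - 1) / 3) + 1 = ((m : ℕ+) : ℕ)
    omega
  -- Adjoint values on basis vectors
  have hT2a : ∀ m : ↥(N1 ∪ N2), ∃ n : ↥(N1 ∪ N2), (n : ℕ+) ∈ N2 ∧ P n = m ∧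
      ContinuousLinearMap.adjoint T2 (b m) = b n := by
    intro m
    obtain ⟨n, hn2, hPn⟩ := hsurjN2 m
    refine ⟨n, hn2, hPn, ?_⟩
    apply hb_vec_ext b
    intro i
    rw [ContinuousLinearMap.adjoint_inner_right]
    rcases hcases i with hi | hi
    · have hne : i ≠ n := by intro he; subst he; exact not_N1_N2 hi hn2
      rw [(hT2 i).2 hi, inner_zero_left, hbi i n, if_neg hne]
    · rw [(hT2 i).1 hi, hbi (P i) m, hbi i n]
      by_cases he : i = n
      · subst he
        rw [if_pos hPn, if_pos rfl]
      · rw [if_neg (fun hPm => he (hinjN2 i n hi hn2 (hPm.trans hPn.symm))), if_neg he]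
  have hT1a : ∀ m : ↥(N1 ∪ N2), (m : ℕ+) ∈ N2 → ∃ n : ↥(N1 ∪ N2), (n : ℕ+) ∈ N1 ∧ P n = m ∧
      ContinuousLinearMap.adjoint T1 (b m) = b n := by
    intro m hm
    obtain ⟨n, hn1, hPn⟩ := hsurjN1 m hm
    refine ⟨n, hn1, hPn, ?_⟩
    apply hb_vec_ext b
    intro i
    rw [ContinuousLinearMap.adjoint_inner_right]
    rcases hcases i with hi | hi
    · rw [(hT1 i).1 hi, hbi (P i) m, hbi i n]
      by_cases he : i = n
      · subst he
        rw [if_pos hPn, if_pos rfl]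
      · rw [if_neg (fun hPm => he (hinjN1 i n hi hn1 (hPm.trans hPn.symm))), if_neg he]
    · have hne : i ≠ n := by intro he; subst he; exact not_N1_N2 hn1 hi
      rw [(hT1 i).2 hi, inner_zero_left, hbi i n, if_neg hne]
  have hT1a0 : ∀ m : ↥(N1 ∪ N2), (m : ℕ+) ∈ N1 → ContinuousLinearMap.adjoint T1 (b m) = 0 := by
    intro m hm
    apply hb_vec_ext b
    intro i
    rw [ContinuousLinearMap.adjoint_inner_right, inner_zero_right]
    rcases hcases i with hi | hi
    · have hne : P i ≠ m := by
        intro he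
        exact not_N1_N2 hm (he ▸ hPN1mem i hi)
      rw [(hT1 i).1 hi, hbi (P i) m, if_neg hne]
    · rw [(hT1 i).2 hi, inner_zero_left]
  -- adjoint of S1
  have hS1adj : ContinuousLinearMap.adjoint S1 = T2 * T1 := by
    rw [hS1, ← ContinuousLinearMap.star_eq_adjoint,
      ← ContinuousLinearMap.star_eq_adjoint T1, ← ContinuousLinearMap.star_eq_adjoint T2,
      star_mul, star_star, star_star]
  have hS2adj : ContinuousLinearMap.adjoint S2 = T2 := by
    rw [hS2, ContinuousLinearMap.adjoint_adjoint]
  -- isometry relations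
  have hS2iso : ContinuousLinearMap.adjoint S2 * S2 = 1 := by
    rw [hS2adj, hS2]
    apply hb_op_ext b
    intro m
    obtain ⟨n, hn2, hPn, he⟩ := hT2a m
    simp only [ContinuousLinearMap.mul_apply, ContinuousLinearMap.one_apply]
    rw [he, (hT2 n).1 hn2, hPn]
  have hS1iso : ContinuousLinearMap.adjoint S1 * S1 = 1 := by
    rw [hS1adj, hS1]
    apply hb_op_ext b
    intro m
    obtain ⟨n, hn2, hPn, he2⟩ := hT2a m
    obtain ⟨r, hr1, hPr, he1⟩ := hT1a n hn2
    simp only [ContinuousLinearMap.mul_apply, ContinuousLinearMap.one_apply]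
    rw [he2, he1, (hT1 r).1 hr1, hPr, (hT2 n).1 hn2, hPn]
  -- the sum relation
  have hsum : S1 * ContinuousLinearMap.adjoint S1 + S2 * ContinuousLinearMap.adjoint S2 = 1 := by
    apply hb_op_ext b
    intro m
    rw [hS1adj, hS2adj, hS1, hS2]
    simp only [ContinuousLinearMap.add_apply, ContinuousLinearMap.mul_apply,
      ContinuousLinearMap.one_apply]
    rcases hcases m with hm | hm
    · rw [(hT1 m).1 hm, (hT2 (P m)).1 (hPN1mem m hm)]
      obtain ⟨n, hn2, hPn, he2⟩ := hT2a (P (P m))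
      rw [he2]
      have hn : n = P m := hinjN2 n (P m) hn2 (hPN1mem m hm) hPn
      subst hn
      obtain ⟨r, hr1, hPr, he1⟩ := hT1a (P m) (hPN1mem m hm)
      rw [he1]
      have hr : r = m := hinjN1 r m hr1 hm hPr
      rw [hr, (hT2 m).2 hm, map_zero, add_zero]
    · rw [(hT1 m).2 hm, map_zero, map_zero, map_zero, zero_add, (hT2 m).1 hm]
      obtain ⟨n, hn2, hPn, he2⟩ := hT2a (P m)
      have hn : n = m := hinjN2 n m hn2 hm hPn
      rw [he2, hn]
  -- orthogonality
  have horth1 : ContinuousLinearMap.adjoint S1 * S2 = 0 := by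
    rw [hS1adj, hS2]
    apply hb_op_ext b
    intro m
    obtain ⟨n, hn2, hPn, he⟩ := hT2a m
    simp only [ContinuousLinearMap.mul_apply, ContinuousLinearMap.zero_apply]
    rw [he, (hT1 n).2 hn2, map_zero]
  have horth2 : ContinuousLinearMap.adjoint S2 * S1 = 0 := by
    rw [hS2adj, hS1]
    apply hb_op_ext b
    intro m
    obtain ⟨n, hn2, hPn, he2⟩ := hT2a m
    obtain ⟨r, hr1, hPr, he1⟩ := hT1a n hn2
    simp only [ContinuousLinearMap.mul_apply, ContinuousLinearMap.zero_apply]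
    rw [he2, he1, (hT2 r).2 hr1]
  -- T1 in terms of S1, S2
  have hT1eq : T1 = S2 * ContinuousLinearMap.adjoint S1 := by
    apply hb_op_ext b
    intro i
    rw [hS1adj, hS2]
    simp only [ContinuousLinearMap.mul_apply]
    rcases hcases i with hi | hi
    · rw [(hT1 i).1 hi, (hT2 (P i)).1 (hPN1mem i hi)]
      obtain ⟨n, hn2, hPn, he2⟩ := hT2a (P (P i))
      rw [he2]
      have hn : n = P i := hinjN2 n (P i) hn2 (hPN1mem i hi) hPn
      rw [hn]
    · rw [(hT1 i).2 hi, map_zero, map_zero]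
  -- the C*-algebra equality
  have halg : NonUnitalStarAlgebra.adjoin ℂ ({S1, S2} : Set (H →L[ℂ] H)) =
      NonUnitalStarAlgebra.adjoin ℂ ({T1, T2} : Set (H →L[ℂ] H)) := by
    have hT1mem : T1 ∈ NonUnitalStarAlgebra.adjoin ℂ ({T1, T2} : Set (H →L[ℂ] H)) :=
      NonUnitalStarAlgebra.subset_adjoin ℂ _ (Set.mem_insert _ _)
    have hT2mem : T2 ∈ NonUnitalStarAlgebra.adjoin ℂ ({T1, T2} : Set (H →L[ℂ] H)) :=
      NonUnitalStarAlgebra.subset_adjoin ℂ _ (Set.mem_insert_of_mem _ rfl)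
    have hS1mem : S1 ∈ NonUnitalStarAlgebra.adjoin ℂ ({S1, S2} : Set (H →L[ℂ] H)) :=
      NonUnitalStarAlgebra.subset_adjoin ℂ _ (Set.mem_insert _ _)
    have hS2mem : S2 ∈ NonUnitalStarAlgebra.adjoin ℂ ({S1, S2} : Set (H →L[ℂ] H)) :=
      NonUnitalStarAlgebra.subset_adjoin ℂ _ (Set.mem_insert_of_mem _ rfl)
    apply le_antisymm
    · apply NonUnitalStarAlgebra.adjoin_le
      intro s hs
      rcases hs with hs | hs
      · rw [hs, hS1, ← ContinuousLinearMap.star_eq_adjoint,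
          ← ContinuousLinearMap.star_eq_adjoint]
        exact mul_mem (star_mem hT1mem) (star_mem hT2mem)
      · rw [Set.mem_singleton_iff.mp hs, hS2, ← ContinuousLinearMap.star_eq_adjoint]
        exact star_mem hT2mem
    · apply NonUnitalStarAlgebra.adjoin_le
      intro s hs
      rcases hs with hs | hs
      · rw [hs, hT1eq, ← ContinuousLinearMap.star_eq_adjoint]
        exact mul_mem hS2mem (star_mem hS1mem)
      · rw [Set.mem_singleton_iff.mp hs]
        have : T2 = star S2 := by
          rw [hS2, ContinuousLinearMap.star_eq_adjoint, ContinuousLinearMap.adjoint_adjoint]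
        rw [this]
        exact star_mem hS2mem
  refine ⟨?_, ?_, ?_, hsum, horth1, horth2⟩
  · unfold CstarGen
    rw [halg]
  · exact norm_of_adjoint_mul_self S1 hS1iso
  · exact norm_of_adjoint_mul_self S2 hS2iso

end Main
end

section
/- Let P be the first-return map of the Collatz map on N1 ∪ N2, H a complex Hilbert space with orthonormal basis {e_n}_{n ∈ N1∪N2}, T1, T2 the bounded operators with T1 e_n = e_{P(n)} for n ∈ N1, T1 e_n = 0 for n ∈ N2, T2 e_n = e_{P(n)} for n ∈ N2, T2 e_n = 0 for n ∈ N1, and S1 = T1*T2*, S2 = T2*. Then for every n ∈ N1 ∪ N2, the closure of C*(S1,S2)·e_n equals the closed linear span of {e_m : m ∈ N1 ∪ N2, m ~ n}, where ~ is the orbit equivalence relation induced by P. -/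
-- auxiliary number theory
lemma aux_N1_odd {n : ℕ+} (h : n ∈ N1) : (n:ℕ) % 2 = 1 := by
  rcases h with h | h <;> omega

lemma aux_N2_even {n : ℕ+} (h : n ∈ N2) : (n:ℕ) % 2 = 0 := by
  rcases h with h | h <;> omega

lemma aux_N1_N2_ne {m n : ℕ+} (h1 : m ∈ N1) (h2 : n ∈ N2) : m ≠ n := by
  intro he
  have h3 := aux_N1_odd h1
  have h4 := aux_N2_even h2
  rw [he] at h3
  omega

lemma aux_collatz_coe_N1 {n : ℕ+} (h : n ∈ N1) : ((collatz n : ℕ+) : ℕ) = 3 * (n:ℕ) + 1 := by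
  rw [show collatz n = 3 * n + 1 from dif_pos (aux_N1_odd h)]
  push_cast
  ring

lemma aux_collatz_N1_mem {n : ℕ+} (h : n ∈ N1) : collatz n ∈ N2 := by
  have hc := aux_collatz_coe_N1 h
  rcases h with h | h
  · exact Or.inl (by omega)
  · exact Or.inr (by omega)

lemma aux_collatz_coe_even {n : ℕ+} (h : (n:ℕ) % 2 = 0) : ((collatz n : ℕ+) : ℕ) = (n:ℕ) / 2 := by
  rw [show collatz n = ⟨(n:ℕ) / 2, _⟩ from dif_neg (show ¬ (n:ℕ) % 2 = 1 by omega)]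
  rfl

lemma aux_N2_iter {x : ℕ+} (hx : x ∈ N2) {k : ℕ}
    (hmin : ∀ j : ℕ, 0 < j → j < k → collatz^[j] x ∉ N1 ∪ N2) :
    ∀ j, j ≤ k → ((collatz^[j] x : ℕ+) : ℕ) * 2 ^ j = (x:ℕ) ∧
      ((collatz^[j] x : ℕ+) : ℕ) % 3 ≠ 0 := by
  intro j
  induction j with
  | zero =>
    intro _
    constructor
    · simp
    · simp only [Function.iterate_zero_apply]
      rcases hx with h | h <;> omega
  | succ j ih =>
    intro hj1
    obtain ⟨hc, hc3⟩ := ih (by omega)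
    have hceven : ((collatz^[j] x : ℕ+) : ℕ) % 2 = 0 := by
      by_contra hodd
      have hco : ((collatz^[j] x : ℕ+) : ℕ) % 2 = 1 := by omega
      have hmem : collatz^[j] x ∈ N1 := by
        have : ((collatz^[j] x : ℕ+) : ℕ) % 6 = 1 ∨ ((collatz^[j] x : ℕ+) : ℕ) % 6 = 5 := by
          omega
        exact this
      rcases Nat.eq_zero_or_pos j with hj0 | hj0
      · rw [hj0, Function.iterate_zero_apply] at hco
        have := aux_N2_even hx
        omega
      · exact hmin j hj0 (by omega) (Or.inl hmem)
    have hstep : collatz^[j+1] x = collatz (collatz^[j] x) := Function.iterate_succ_apply' _ _ _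
    have hhalf : ((collatz (collatz^[j] x) : ℕ+) : ℕ) = ((collatz^[j] x : ℕ+) : ℕ) / 2 :=
      aux_collatz_coe_even hceven
    rw [hstep, hhalf]
    constructor
    · have h2 : ((collatz^[j] x : ℕ+) : ℕ) / 2 * 2 = ((collatz^[j] x : ℕ+) : ℕ) := by omega
      calc ((collatz^[j] x : ℕ+) : ℕ) / 2 * 2 ^ (j+1)
          = (((collatz^[j] x : ℕ+) : ℕ) / 2 * 2) * 2 ^ j := by ring
        _ = ((collatz^[j] x : ℕ+) : ℕ) * 2 ^ j := by rw [h2]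
        _ = (x:ℕ) := hc
    · omega

lemma aux_P_N1 (P : ↥(N1 ∪ N2) → ↥(N1 ∪ N2))
    (hP : ∀ x : ↥(N1 ∪ N2), IsFirstReturn collatz (N1 ∪ N2) ↑x ↑(P x))
    (x : ↥(N1 ∪ N2)) (hx : (x:ℕ+) ∈ N1) : ((P x : ℕ+) : ℕ) = 3 * ((x:ℕ+):ℕ) + 1 := by
  obtain ⟨k, hk0, hkS, hEq, hmin⟩ := hP x
  have h1 : collatz^[1] (x:ℕ+) ∈ N1 ∪ N2 := by
    rw [Function.iterate_one]
    exact Or.inr (aux_collatz_N1_mem hx)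
  have hk1 : k = 1 := by
    by_contra hne
    exact hmin 1 one_pos (by omega) h1
  rw [hEq, hk1, Function.iterate_one, aux_collatz_coe_N1 hx]

lemma aux_P_N1_mem (P : ↥(N1 ∪ N2) → ↥(N1 ∪ N2))
    (hP : ∀ x : ↥(N1 ∪ N2), IsFirstReturn collatz (N1 ∪ N2) ↑x ↑(P x))
    (x : ↥(N1 ∪ N2)) (hx : (x:ℕ+) ∈ N1) : (P x : ℕ+) ∈ N2 := by
  have h := aux_P_N1 P hP x hx
  rcases hx with h1 | h1
  · exact Or.inl (by omega)
  · exact Or.inr (by omega)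

lemma aux_P_inj_N1 (P : ↥(N1 ∪ N2) → ↥(N1 ∪ N2))
    (hP : ∀ x : ↥(N1 ∪ N2), IsFirstReturn collatz (N1 ∪ N2) ↑x ↑(P x))
    (x y : ↥(N1 ∪ N2)) (hx : (x:ℕ+) ∈ N1) (hy : (y:ℕ+) ∈ N1) (hxy : P x = P y) : x = y := by
  have h1 := aux_P_N1 P hP x hx
  have h2 := aux_P_N1 P hP y hy
  rw [hxy] at h1
  exact Subtype.ext (PNat.coe_injective (by omega))

lemma aux_P_N2 (P : ↥(N1 ∪ N2) → ↥(N1 ∪ N2))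
    (hP : ∀ x : ↥(N1 ∪ N2), IsFirstReturn collatz (N1 ∪ N2) ↑x ↑(P x))
    (x : ↥(N1 ∪ N2)) (hx : (x:ℕ+) ∈ N2) :
    ∃ k, 0 < k ∧ ((P x : ℕ+):ℕ) * 2^k = ((x:ℕ+):ℕ) ∧
      ∀ j, 0 < j → j < k → collatz^[j] (x:ℕ+) ∉ N1 ∪ N2 := by
  obtain ⟨k, hk0, hkS, hEq, hmin⟩ := hP x
  refine ⟨k, hk0, ?_, hmin⟩
  rw [hEq]
  exact (aux_N2_iter hx hmin k le_rfl).1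

lemma aux_P_inj_N2_aux {x y w : ℕ+} (hx : x ∈ N2) (hy : y ∈ N2) {k l : ℕ} (hk0 : 0 < k)
    (hk : (w:ℕ) * 2^k = (x:ℕ)) (hl : (w:ℕ) * 2^l = (y:ℕ))
    (hminy : ∀ j, 0 < j → j < l → collatz^[j] y ∉ N1 ∪ N2)
    (hkl : k ≤ l) : x = y := by
  rcases Nat.eq_or_lt_of_le hkl with he | hlt
  · subst he
    exact PNat.coe_injective (by rw [← hk, ← hl])
  · exfalso
    have hj := (aux_N2_iter hy hminy (l - k) (by omega)).1
    have hsplit : (2:ℕ)^l = 2^(l-k) * 2^k := by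
      rw [← pow_add]
      congr 1
      omega
    have hceq : ((collatz^[l-k] y : ℕ+) : ℕ) = (w:ℕ) * 2^k := by
      have h1 : ((collatz^[l-k] y : ℕ+) : ℕ) * 2^(l-k) = ((w:ℕ) * 2^k) * 2^(l-k) := by
        rw [hj, ← hl, hsplit]
        ring
      exact Nat.eq_of_mul_eq_mul_right (pow_pos two_pos _) h1
    have hxx : collatz^[l-k] y = x := PNat.coe_injective (by rw [hceq, hk])
    exact hminy (l-k) (by omega) (by omega) (hxx ▸ Or.inr hx)

lemma aux_P_inj_N2 (P : ↥(N1 ∪ N2) → ↥(N1 ∪ N2))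
    (hP : ∀ x : ↥(N1 ∪ N2), IsFirstReturn collatz (N1 ∪ N2) ↑x ↑(P x))
    (x y : ↥(N1 ∪ N2)) (hx : (x:ℕ+) ∈ N2) (hy : (y:ℕ+) ∈ N2) (hxy : P x = P y) : x = y := by
  obtain ⟨k, hk0, hk, hminx⟩ := aux_P_N2 P hP x hx
  obtain ⟨l, hl0, hl, hminy⟩ := aux_P_N2 P hP y hy
  rw [hxy] at hk
  rcases le_total k l with hkl | hkl
  · exact Subtype.ext (aux_P_inj_N2_aux hx hy hk0 hk hl hminy hkl)
  · exact Subtype.ext (aux_P_inj_N2_aux hy hx hl0 hl hk hminx hkl).symm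

lemma aux_orbEquiv_refl {X : Type*} (f : X → X) (x : X) : orbEquiv f x x :=
  ⟨x, ⟨0, rfl⟩, ⟨0, rfl⟩⟩

lemma aux_orbEquiv_step {X : Type*} (f : X → X) (x y : X) :
    orbEquiv f (f x) y ↔ orbEquiv f x y := by
  constructor
  · rintro ⟨z, ⟨a, ha⟩, hz2⟩
    refine ⟨z, ⟨a+1, ?_⟩, hz2⟩
    show f^[a+1] x = z
    rw [Function.iterate_succ_apply]
    exact ha
  · rintro ⟨z, ⟨a, ha⟩, ⟨c, hc⟩⟩
    refine ⟨f z, ⟨a, ?_⟩, ⟨c+1, ?_⟩⟩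
    · show f^[a] (f x) = f z
      rw [← Function.iterate_succ_apply, Function.iterate_succ_apply']
      exact congrArg f ha
    · show f^[c+1] y = f z
      rw [Function.iterate_succ_apply']
      exact congrArg f hc

open scoped ComplexInnerProductSpace

/-- For every `n ∈ N₁ ∪ N₂`, the closure of `C*(S₁,S₂)·eₙ` equals the closed linear span
of `{eₘ : m ~ n}`, where `~` is the orbit equivalence relation induced by `P`. -/
theorem cstar_cuntz_orbit_span {H : Type*} [NormedAddCommGroup H] [InnerProductSpace ℂ H]
    [CompleteSpace H] (b : HilbertBasis ↥(N1 ∪ N2) ℂ H)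
    (P : ↥(N1 ∪ N2) → ↥(N1 ∪ N2))
    (hP : ∀ x : ↥(N1 ∪ N2), IsFirstReturn collatz (N1 ∪ N2) ↑x ↑(P x))
    (T1 T2 : H →L[ℂ] H)
    (hT1 : ∀ x : ↥(N1 ∪ N2), ((x : ℕ+) ∈ N1 → T1 (b x) = b (P x)) ∧
      ((x : ℕ+) ∈ N2 → T1 (b x) = 0))
    (hT2 : ∀ x : ↥(N1 ∪ N2), ((x : ℕ+) ∈ N2 → T2 (b x) = b (P x)) ∧
      ((x : ℕ+) ∈ N1 → T2 (b x) = 0))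
    (S1 S2 : H →L[ℂ] H)
    (hS1 : S1 = ContinuousLinearMap.adjoint T1 * ContinuousLinearMap.adjoint T2)
    (hS2 : S2 = ContinuousLinearMap.adjoint T2) (n : ↥(N1 ∪ N2)) :
    closure ((fun A => A (b n)) '' CstarGen {S1, S2}) =
      closure ((Submodule.span ℂ (b '' {m : ↥(N1 ∪ N2) | orbEquiv P m n}) :
        Submodule ℂ H) : Set H) := by
  classical
  have hcases : ∀ i : ↥(N1 ∪ N2), (i:ℕ+) ∈ N1 ∨ (i:ℕ+) ∈ N2 := fun i => i.2
  -- basis extensionality and orthonormality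
  have hext : ∀ x y : H, (∀ i, ⟪b i, x⟫ = ⟪b i, y⟫) → x = y := by
    intro x y h
    apply b.repr.injective
    refine lp.ext (funext fun i => ?_)
    rw [b.repr_apply_apply, b.repr_apply_apply, h i]
  have hon : ∀ i j, ⟪b i, b j⟫ = if i = j then (1:ℂ) else 0 :=
    orthonormal_iff_ite.mp b.orthonormal
  have hNe : ∀ (i j : ↥(N1 ∪ N2)), (i:ℕ+) ∈ N1 → (j:ℕ+) ∈ N2 → i ≠ j := by
    intro i j hi hj he
    exact aux_N1_N2_ne hi hj (congrArg Subtype.val he)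
  have hinj1 := aux_P_inj_N1 P hP
  have hinj2 := aux_P_inj_N2 P hP
  have hPN1 := aux_P_N1_mem P hP
  -- adjoint computations on basis vectors
  have hT1a : ∀ z : ↥(N1 ∪ N2), (z:ℕ+) ∈ N1 → ContinuousLinearMap.adjoint T1 (b (P z)) = b z := by
    intro z hz
    apply hext
    intro j
    rw [ContinuousLinearMap.adjoint_inner_right]
    rcases hcases j with hj | hj
    · rw [(hT1 j).1 hj, hon, hon]
      by_cases hjz : j = z
      · rw [if_pos hjz, if_pos (congrArg P hjz)]
      · rw [if_neg hjz, if_neg (fun h => hjz (hinj1 j z hj hz h))]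
    · rw [(hT1 j).2 hj, inner_zero_left, hon, if_neg (Ne.symm (hNe z j hz hj))]
  have hT2a : ∀ z : ↥(N1 ∪ N2), (z:ℕ+) ∈ N2 → ContinuousLinearMap.adjoint T2 (b (P z)) = b z := by
    intro z hz
    apply hext
    intro j
    rw [ContinuousLinearMap.adjoint_inner_right]
    rcases hcases j with hj | hj
    · rw [(hT2 j).2 hj, inner_zero_left, hon, if_neg (hNe j z hj hz)]
    · rw [(hT2 j).1 hj, hon, hon]
      by_cases hjz : j = z
      · rw [if_pos hjz, if_pos (congrArg P hjz)]
      · rw [if_neg hjz, if_neg (fun h => hjz (hinj2 j z hj hz h))]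
  have hT1a0 : ∀ z : ↥(N1 ∪ N2), (z:ℕ+) ∈ N1 → ContinuousLinearMap.adjoint T1 (b z) = 0 := by
    intro z hz
    apply hext
    intro j
    rw [ContinuousLinearMap.adjoint_inner_right, inner_zero_right]
    rcases hcases j with hj | hj
    · rw [(hT1 j).1 hj, hon, if_neg (Ne.symm (hNe z (P j) hz (hPN1 j hj)))]
    · rw [(hT1 j).2 hj, inner_zero_left]
  -- operator extensionality on the basis
  have hdense : Dense (↑(Submodule.span ℂ (Set.range ⇑b)) : Set H) := by
    rw [dense_iff_closure_eq, ← Submodule.topologicalClosure_coe, b.dense_span,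
      Submodule.top_coe]
  have hopext : ∀ A B : H →L[ℂ] H, (∀ i, A (b i) = B (b i)) → A = B := by
    intro A B h
    refine ContinuousLinearMap.ext_on hdense ?_
    rintro x ⟨i, rfl⟩
    exact h i
  -- membership of the building blocks in the adjoin
  have hS1m : S1 ∈ NonUnitalStarAlgebra.adjoin ℂ ({S1, S2} : Set (H →L[ℂ] H)) :=
    NonUnitalStarAlgebra.subset_adjoin ℂ _ (Set.mem_insert _ _)
  have hS2m : S2 ∈ NonUnitalStarAlgebra.adjoin ℂ ({S1, S2} : Set (H →L[ℂ] H)) :=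
    NonUnitalStarAlgebra.subset_adjoin ℂ _ (Set.mem_insert_of_mem _ rfl)
  have hT2eq : T2 = star S2 := by
    rw [hS2, ContinuousLinearMap.star_eq_adjoint, ContinuousLinearMap.adjoint_adjoint]
  have hT2m : T2 ∈ NonUnitalStarAlgebra.adjoin ℂ ({S1, S2} : Set (H →L[ℂ] H)) := by
    rw [hT2eq]; exact star_mem hS2m
  have hT2am : ContinuousLinearMap.adjoint T2 ∈
      NonUnitalStarAlgebra.adjoin ℂ ({S1, S2} : Set (H →L[ℂ] H)) := hS2 ▸ hS2m
  have hT1aeq : ContinuousLinearMap.adjoint T1 = S1 * T2 := by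
    apply hopext
    intro i
    rw [ContinuousLinearMap.mul_apply]
    rcases hcases i with hi | hi
    · rw [hT1a0 i hi, (hT2 i).2 hi, map_zero]
    · rw [(hT2 i).1 hi, hS1, ContinuousLinearMap.mul_apply, hT2a i hi]
  have hT1am : ContinuousLinearMap.adjoint T1 ∈
      NonUnitalStarAlgebra.adjoin ℂ ({S1, S2} : Set (H →L[ℂ] H)) := by
    rw [hT1aeq]; exact mul_mem hS1m hT2m
  have hT1eq : T1 = star (ContinuousLinearMap.adjoint T1) := by
    rw [ContinuousLinearMap.star_eq_adjoint, ContinuousLinearMap.adjoint_adjoint]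
  have hT1m : T1 ∈ NonUnitalStarAlgebra.adjoin ℂ ({S1, S2} : Set (H →L[ℂ] H)) := by
    rw [hT1eq]; exact star_mem hT1am
  -- the key word lemma
  have key : ∀ (k : ℕ) (x : ↥(N1 ∪ N2)), ∃ Aop : H →L[ℂ] H,
      Aop ∈ NonUnitalStarAlgebra.adjoin ℂ ({S1, S2} : Set (H →L[ℂ] H)) ∧
      Aop (b x) = b (P^[k] x) ∧ (star Aop) (b (P^[k] x)) = b x := by
    intro k
    induction k with
    | zero =>
      intro x
      rcases hcases x with hx | hx
      · refine ⟨ContinuousLinearMap.adjoint T1 * T1, mul_mem hT1am hT1m, ?_, ?_⟩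
        · rw [Function.iterate_zero_apply, ContinuousLinearMap.mul_apply, (hT1 x).1 hx,
            hT1a x hx]
        · simp only [Function.iterate_zero_apply, star_mul, ContinuousLinearMap.star_eq_adjoint,
            ContinuousLinearMap.adjoint_adjoint, ContinuousLinearMap.mul_apply]
          rw [(hT1 x).1 hx, hT1a x hx]
      · refine ⟨ContinuousLinearMap.adjoint T2 * T2, mul_mem hT2am hT2m, ?_, ?_⟩
        · rw [Function.iterate_zero_apply, ContinuousLinearMap.mul_apply, (hT2 x).1 hx,
            hT2a x hx]
        · simp only [Function.iterate_zero_apply, star_mul, ContinuousLinearMap.star_eq_adjoint,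
            ContinuousLinearMap.adjoint_adjoint, ContinuousLinearMap.mul_apply]
          rw [(hT2 x).1 hx, hT2a x hx]
    | succ k ih =>
      intro x
      obtain ⟨Aop, hm, hf, hb⟩ := ih x
      rcases hcases (P^[k] x) with hz | hz
      · refine ⟨T1 * Aop, mul_mem hT1m hm, ?_, ?_⟩
        · rw [ContinuousLinearMap.mul_apply, hf, (hT1 _).1 hz, Function.iterate_succ_apply']
        · rw [star_mul, ContinuousLinearMap.mul_apply, Function.iterate_succ_apply',
            ContinuousLinearMap.star_eq_adjoint T1, hT1a _ hz, hb]
      · refine ⟨T2 * Aop, mul_mem hT2m hm, ?_, ?_⟩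
        · rw [ContinuousLinearMap.mul_apply, hf, (hT2 _).1 hz, Function.iterate_succ_apply']
        · rw [star_mul, ContinuousLinearMap.mul_apply, Function.iterate_succ_apply',
            ContinuousLinearMap.star_eq_adjoint T2, hT2a _ hz, hb]
  -- the equivalence class and its span
  set E : Set ↥(N1 ∪ N2) := {m | orbEquiv P m n} with hE
  have hnE : n ∈ E := aux_orbEquiv_refl P n
  have hEiff : ∀ m, P m ∈ E ↔ m ∈ E := fun m => aux_orbEquiv_step P m n
  set V : Submodule ℂ H := (Submodule.span ℂ (b '' E)).topologicalClosure with hV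
  set Wm : Submodule ℂ H := (Submodule.span ℂ (b '' Eᶜ)).topologicalClosure with hW
  -- invariance of closed spans under T1, T2
  have hinv : ∀ (F : Set ↥(N1 ∪ N2)) (T : H →L[ℂ] H),
      (∀ m ∈ F, P m ∈ F) → (∀ i, T (b i) = b (P i) ∨ T (b i) = 0) →
      ∀ v ∈ (Submodule.span ℂ (b '' F)).topologicalClosure,
        T v ∈ (Submodule.span ℂ (b '' F)).topologicalClosure := by
    intro F T hF hT v hv
    have hle : Submodule.span ℂ (b '' F) ≤
        ((Submodule.span ℂ (b '' F)).topologicalClosure).comap (T : H →ₗ[ℂ] H) := by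
      rw [Submodule.span_le]
      rintro _ ⟨m, hm, rfl⟩
      simp only [SetLike.mem_coe, Submodule.mem_comap, ContinuousLinearMap.coe_coe]
      rcases hT m with h | h
      · rw [h]
        exact Submodule.le_topologicalClosure _ (Submodule.subset_span ⟨P m, hF m hm, rfl⟩)
      · rw [h]
        exact zero_mem _
    have hcl : IsClosed ((((Submodule.span ℂ (b '' F)).topologicalClosure).comap
        (T : H →ₗ[ℂ] H) : Submodule ℂ H) : Set H) :=
      (Submodule.isClosed_topologicalClosure _).preimage T.continuous
    exact Submodule.mem_comap.mp (Submodule.topologicalClosure_minimal _ hle hcl hv)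
  -- orthogonality facts
  have hbperp : ∀ (F : Set ↥(N1 ∪ N2)) (i), i ∉ F →
      ∀ v ∈ (Submodule.span ℂ (b '' F)).topologicalClosure, ⟪b i, v⟫ = 0 := by
    intro F i hi v hv
    have hker : (Submodule.span ℂ (b '' F)).topologicalClosure ≤
        LinearMap.ker (innerSL ℂ (b i) : H →ₗ[ℂ] ℂ) := by
      apply Submodule.topologicalClosure_minimal
      · rw [Submodule.span_le]
        rintro _ ⟨m, hm, rfl⟩
        simp only [SetLike.mem_coe, LinearMap.mem_ker, ContinuousLinearMap.coe_coe, innerSL_apply_apply]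
        rw [hon, if_neg (fun h => hi (by rw [h]; exact hm))]
      · exact ContinuousLinearMap.isClosed_ker _
    exact hker hv
  have hperp : ∀ v ∈ V, ∀ w ∈ Wm, ⟪w, v⟫ = 0 := by
    intro v hv
    have hker : Wm ≤ LinearMap.ker (innerSL ℂ v : H →ₗ[ℂ] ℂ) := by
      apply Submodule.topologicalClosure_minimal
      · rw [Submodule.span_le]
        rintro _ ⟨m, hm, rfl⟩
        simp only [SetLike.mem_coe, LinearMap.mem_ker, ContinuousLinearMap.coe_coe, innerSL_apply_apply]
        exact inner_eq_zero_symm.mpr (hbperp E m hm v hv)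
      · exact ContinuousLinearMap.isClosed_ker _

    intro w hw
    have h0 : innerSL ℂ v w = 0 := hker hw
    rw [innerSL_apply_apply] at h0
    exact inner_eq_zero_symm.mpr h0
  have hmemV : ∀ x : H, (∀ i, i ∉ E → ⟪b i, x⟫ = 0) → x ∈ V := by
    intro x hx
    have hxcl : x ∈ closure (↑(Submodule.span ℂ (b '' E)) : Set H) := by
      refine mem_closure_of_tendsto (b.hasSum_repr x) (Filter.Eventually.of_forall ?_)
      intro s
      refine Submodule.sum_mem _ ?_
      intro i _
      by_cases hi : i ∈ E
      · exact Submodule.smul_mem _ _ (Submodule.subset_span ⟨i, hi, rfl⟩)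
      · rw [b.repr_apply_apply, hx i hi, zero_smul]
        exact zero_mem _
    rw [hV, ← SetLike.mem_coe, Submodule.topologicalClosure_coe]
    exact hxcl
  have hadjinv : ∀ (T : H →L[ℂ] H), (∀ w ∈ Wm, T w ∈ Wm) →
      ∀ v ∈ V, ContinuousLinearMap.adjoint T v ∈ V := by
    intro T hT v hv
    apply hmemV
    intro i hi
    have hbi : b i ∈ Wm :=
      Submodule.le_topologicalClosure _ (Submodule.subset_span ⟨i, hi, rfl⟩)
    rw [ContinuousLinearMap.adjoint_inner_right]
    exact hperp v hv _ (hT _ hbi)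
  have hT1or : ∀ i, T1 (b i) = b (P i) ∨ T1 (b i) = 0 := by
    intro i
    rcases hcases i with h | h
    · exact Or.inl ((hT1 i).1 h)
    · exact Or.inr ((hT1 i).2 h)
  have hT2or : ∀ i, T2 (b i) = b (P i) ∨ T2 (b i) = 0 := by
    intro i
    rcases hcases i with h | h
    · exact Or.inr ((hT2 i).2 h)
    · exact Or.inl ((hT2 i).1 h)
  have hEstep : ∀ m ∈ E, P m ∈ E := fun m hm => (hEiff m).mpr hm
  have hEcstep : ∀ m ∈ Eᶜ, P m ∈ Eᶜ := fun m hm hPm => hm ((hEiff m).mp hPm)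
  have hT1V := hinv E T1 hEstep hT1or
  have hT2V := hinv E T2 hEstep hT2or
  have hT1W := hinv Eᶜ T1 hEcstep hT1or
  have hT2W := hinv Eᶜ T2 hEcstep hT2or
  have hT1aV := hadjinv T1 hT1W
  have hT2aV := hadjinv T2 hT2W
  -- every element of the adjoin preserves V
  have hAlgInv : ∀ X ∈ NonUnitalStarAlgebra.adjoin ℂ ({S1, S2} : Set (H →L[ℂ] H)),
      (∀ v ∈ V, X v ∈ V) ∧ (∀ v ∈ V, (star X) v ∈ V) := by
    intro X hX
    induction hX using NonUnitalStarAlgebra.adjoin_induction with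
    | mem x hx =>
      rcases hx with rfl | hx
      · constructor
        · intro v hv
          rw [hS1, ContinuousLinearMap.mul_apply]
          exact hT1aV _ (hT2aV _ hv)
        · intro v hv
          rw [hS1, star_mul, ContinuousLinearMap.mul_apply,
            ContinuousLinearMap.star_eq_adjoint, ContinuousLinearMap.star_eq_adjoint,
            ContinuousLinearMap.adjoint_adjoint, ContinuousLinearMap.adjoint_adjoint]
          exact hT2V _ (hT1V _ hv)
      · rw [Set.mem_singleton_iff] at hx
        subst hx
        constructor
        · intro v hv
          rw [hS2]
          exact hT2aV _ hv
        · intro v hv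
          rw [hS2, ContinuousLinearMap.star_eq_adjoint, ContinuousLinearMap.adjoint_adjoint]
          exact hT2V _ hv
    | add x y hx hy ihx ihy =>
      constructor
      · intro v hv
        rw [ContinuousLinearMap.add_apply]
        exact add_mem (ihx.1 v hv) (ihy.1 v hv)
      · intro v hv
        rw [star_add, ContinuousLinearMap.add_apply]
        exact add_mem (ihx.2 v hv) (ihy.2 v hv)
    | zero =>
      constructor
      · intro v _
        rw [ContinuousLinearMap.zero_apply]
        exact zero_mem _
      · intro v _
        rw [star_zero, ContinuousLinearMap.zero_apply]
        exact zero_mem _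
    | mul x y hx hy ihx ihy =>
      constructor
      · intro v hv
        rw [ContinuousLinearMap.mul_apply]
        exact ihx.1 _ (ihy.1 v hv)
      · intro v hv
        rw [star_mul, ContinuousLinearMap.mul_apply]
        exact ihy.2 _ (ihx.2 v hv)
    | smul r x hx ihx =>
      constructor
      · intro v hv
        rw [ContinuousLinearMap.smul_apply]
        exact Submodule.smul_mem _ _ (ihx.1 v hv)
      · intro v hv
        rw [star_smul, ContinuousLinearMap.smul_apply]
        exact Submodule.smul_mem _ _ (ihx.2 v hv)
    | star x hx ihx =>
      refine ⟨ihx.2, ?_⟩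
      intro v hv
      rw [star_star]
      exact ihx.1 v hv
  -- LHS ⊆ RHS
  have hbn : b n ∈ V :=
    Submodule.le_topologicalClosure _ (Submodule.subset_span ⟨n, hnE, rfl⟩)
  have himV : (fun A => A (b n)) '' CstarGen {S1, S2} ⊆ (V : Set H) := by
    rintro _ ⟨A, hA, rfl⟩
    have hclosed : IsClosed {A : H →L[ℂ] H | A (b n) ∈ V} := by
      have heq : {A : H →L[ℂ] H | A (b n) ∈ V} =
          (fun A : H →L[ℂ] H => A (b n)) ⁻¹' (V : Set H) := rfl
      rw [heq]
      exact (Submodule.isClosed_topologicalClosure _).preimage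
        (ContinuousLinearMap.apply ℂ H (b n)).continuous
    have hsub : (CstarGen {S1, S2} : Set (H →L[ℂ] H)) ⊆ {A | A (b n) ∈ V} :=
      closure_minimal (fun A hA => (hAlgInv A hA).1 (b n) hbn) hclosed
    exact hsub hA
  -- RHS ⊆ LHS : each b m, m ∈ E, is in the image of the adjoin
  have hbmIm : ∀ m ∈ E, ∃ A, A ∈ NonUnitalStarAlgebra.adjoin ℂ
      ({S1, S2} : Set (H →L[ℂ] H)) ∧ A (b n) = b m := by
    intro m hm
    obtain ⟨y, hy1, hy2⟩ := hm
    obtain ⟨a, ha⟩ := hy1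
    obtain ⟨c, hc⟩ := hy2
    have ha' : P^[a] m = y := ha
    have hc' : P^[c] n = y := hc
    obtain ⟨Aop, hAm, hAf, _⟩ := key c n
    obtain ⟨Bop, hBm, _, hBb⟩ := key a m
    refine ⟨star Bop * Aop, mul_mem (star_mem hBm) hAm, ?_⟩
    rw [ContinuousLinearMap.mul_apply, hAf, hc', ← ha', hBb]
  have hspanIm : Submodule.span ℂ (b '' E) ≤
      Submodule.map ((ContinuousLinearMap.apply ℂ H (b n) :
          (H →L[ℂ] H) →L[ℂ] H) : (H →L[ℂ] H) →ₗ[ℂ] H)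
        (NonUnitalStarAlgebra.adjoin ℂ
          ({S1, S2} : Set (H →L[ℂ] H))).toNonUnitalSubalgebra.toSubmodule := by
    rw [Submodule.span_le]
    rintro _ ⟨m, hm, rfl⟩
    obtain ⟨A, hA, hAe⟩ := hbmIm m hm
    exact ⟨A, hA, hAe⟩
  have hImsub : ((Submodule.map ((ContinuousLinearMap.apply ℂ H (b n) :
          (H →L[ℂ] H) →L[ℂ] H) : (H →L[ℂ] H) →ₗ[ℂ] H)
        (NonUnitalStarAlgebra.adjoin ℂ
          ({S1, S2} : Set (H →L[ℂ] H))).toNonUnitalSubalgebra.toSubmodule :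
        Submodule ℂ H) : Set H) ⊆ (fun A => A (b n)) '' CstarGen {S1, S2} := by
    rintro _ ⟨A, hA, rfl⟩
    exact ⟨A, subset_closure hA, rfl⟩
  apply Set.Subset.antisymm
  · have h1 : closure ((fun A => A (b n)) '' CstarGen {S1, S2}) ⊆ (V : Set H) :=
      closure_minimal himV (Submodule.isClosed_topologicalClosure _)
    intro x hx
    rw [← Submodule.topologicalClosure_coe]
    exact h1 hx
  · refine closure_minimal ?_ isClosed_closure
    intro x hx
    exact subset_closure (hImsub (hspanIm hx))
end
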